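/- arXiv:2212.05280 — 4 statements merged into one kernel-verified Lean document; each statement's English description precedes it below -/
import Mathlib

section
/- Let y* ∈ ℝ^{Z+1} be defined by y*_0 = K_{σ(τ+1)}/ρ_{σ(τ+1)}, y*_{σ(k)} = K_{σ(k)} − ρ_{σ(k)} K_{σ(τ+1)}/ρ_{σ(τ+1)} for 1 ≤ k ≤ τ, and y*_{σ(k)} = 0 for k ≥ τ+1. Then y* is an optimal solution of the dual linear program [LD]: it is feasible for [LD], and for every feasible point y of [LD] one has B y*_0 + Σ_{k=1}^{Z} r_k y*_k ≤ B y_0 + Σ_{k=1}^{Z} r_k y_k. -/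
/-- The point y* (with y*_0 = K_{σ(τ+1)}/ρ_{σ(τ+1)}, interior sorted
coordinates K_{σ(k)} − ρ_{σ(k)} K_{σ(τ+1)}/ρ_{σ(τ+1)}, zero afterwards) is an optimal
solution of the dual linear program [LD]: it is feasible for [LD], and its dual
objective value is at most that of every dual-feasible point. Indices are 0-based:
the 1-based index k of the paper corresponds to the 0-based index k-1, so "1 ≤ k ≤ τ"
becomes (k : ℕ) < τ and "k ≥ τ+1" becomes τ ≤ (k : ℕ). -/
theorem stmt_2 (Z : ℕ) (hZ : 1 ≤ Z) (ρ r K : Fin Z → ℝ) (B : ℝ)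
    (hρ : ∀ k, 0 < ρ k) (hr : ∀ k, 0 ≤ r k) (hK : ∀ k, 0 ≤ K k)
    (hB : 0 ≤ B) (hfull : B < ∑ k, ρ k * r k)
    (σ : Equiv.Perm (Fin Z))
    (hσ : ∀ k l : Fin Z, k ≤ l → K (σ l) / ρ (σ l) ≤ K (σ k) / ρ (σ k))
    (τ : ℕ) (hτ : τ < Z)
    (hτle : ∑ m ∈ Finset.Iio (⟨τ, hτ⟩ : Fin Z), ρ (σ m) * r (σ m) ≤ B)
    (hτmax : B < ∑ m ∈ Finset.Iic (⟨τ, hτ⟩ : Fin Z), ρ (σ m) * r (σ m))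
    (ystar0 : ℝ) (ystar : Fin Z → ℝ)
    (hy0 : ystar0 = K (σ (⟨τ, hτ⟩ : Fin Z)) / ρ (σ (⟨τ, hτ⟩ : Fin Z)))
    (hylt : ∀ k : Fin Z, (k : ℕ) < τ → ystar (σ k) =
      K (σ k) - ρ (σ k) * (K (σ (⟨τ, hτ⟩ : Fin Z)) / ρ (σ (⟨τ, hτ⟩ : Fin Z))))
    (hyge : ∀ k : Fin Z, τ ≤ (k : ℕ) → ystar (σ k) = 0) :
    (0 ≤ ystar0 ∧ (∀ k, 0 ≤ ystar k) ∧ (∀ k, K k ≤ ρ k * ystar0 + ystar k)) ∧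
      (∀ (y0 : ℝ) (y : Fin Z → ℝ), 0 ≤ y0 → (∀ k, 0 ≤ y k) →
        (∀ k, K k ≤ ρ k * y0 + y k) →
        B * ystar0 + ∑ k, r k * ystar k ≤ B * y0 + ∑ k, r k * y k) := by
  classical
  set t : Fin Z := ⟨τ, hτ⟩ with ht
  set c : ℝ := K (σ t) / ρ (σ t) with hc
  have hc0 : 0 ≤ c := div_nonneg (hK _) (hρ _).le
  have hKt : K (σ t) = ρ (σ t) * c := by
    rw [hc, mul_comm, div_mul_cancel₀ _ (hρ (σ t)).ne']
  have hynn : ∀ k, 0 ≤ ystar k := by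
    intro k
    obtain ⟨j, rfl⟩ : ∃ j, σ j = k := ⟨σ.symm k, σ.apply_symm_apply k⟩
    rcases lt_or_ge (j : ℕ) τ with h | h
    · rw [hylt j h]
      have hjt : j ≤ t := by simp [Fin.le_def, ht, h.le]
      have h1 := hσ j t hjt
      have h2 := (le_div_iff₀ (hρ (σ j))).mp h1
      linarith
    · rw [hyge j h]
  have hfeas : ∀ k, K k ≤ ρ k * ystar0 + ystar k := by
    intro k
    obtain ⟨j, rfl⟩ : ∃ j, σ j = k := ⟨σ.symm k, σ.apply_symm_apply k⟩
    rcases lt_or_ge (j : ℕ) τ with h | h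
    · rw [hylt j h, hy0]; ring_nf; rfl
    · rw [hyge j h, hy0]
      have hjt : t ≤ j := by simp [Fin.le_def, ht, h]
      have h1 := hσ t j hjt
      have h2 := (div_le_iff₀ (hρ (σ j))).mp h1
      linarith
  refine ⟨⟨hy0 ▸ hc0, hynn, hfeas⟩, ?_⟩
  set A : ℝ := ∑ k ∈ Finset.Iio t, ρ (σ k) * r (σ k) with hA
  set D : ℝ := ∑ k ∈ Finset.Iio t, r (σ k) * K (σ k) with hD
  have expand : ∀ (z : ℝ) (S : Finset (Fin Z)),
      ∑ k ∈ S, r (σ k) * (K (σ k) - ρ (σ k) * z)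
        = (∑ k ∈ S, r (σ k) * K (σ k)) - z * ∑ k ∈ S, ρ (σ k) * r (σ k) := by
    intro z S
    rw [Finset.mul_sum, ← Finset.sum_sub_distrib]
    exact Finset.sum_congr rfl fun i _ => by ring
  have hstar : ∑ k, r k * ystar k = D - c * A := by
    have h1 : ∑ k, r k * ystar k = ∑ k ∈ Finset.Iio t, r (σ k) * ystar (σ k) := by
      rw [← Equiv.sum_comp σ (fun k => r k * ystar k)]
      symm
      apply Finset.sum_subset (Finset.subset_univ _)
      intro x _ hx
      have hτx : τ ≤ (x : ℕ) := by
        simpa [Finset.mem_Iio, Fin.lt_def, ht, not_lt] using hx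
      rw [hyge x hτx, mul_zero]
    rw [h1, ← expand c (Finset.Iio t)]
    apply Finset.sum_congr rfl
    intro x hx
    rw [hylt x (by simpa [Finset.mem_Iio, Fin.lt_def, ht] using hx)]
  have key : ∀ (y0 : ℝ) (y : Fin Z → ℝ), (∀ k, 0 ≤ y k) →
      (∀ k, K k ≤ ρ k * y0 + y k) → ∀ S : Finset (Fin Z),
      ∑ k ∈ S, r (σ k) * (K (σ k) - ρ (σ k) * y0) ≤ ∑ k, r k * y k := by
    intro y0 y hy hfy S
    calc ∑ k ∈ S, r (σ k) * (K (σ k) - ρ (σ k) * y0)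
        ≤ ∑ k ∈ S, r (σ k) * y (σ k) :=
          Finset.sum_le_sum fun i _ =>
            mul_le_mul_of_nonneg_left (by linarith [hfy (σ i)]) (hr _)
      _ ≤ ∑ k, r (σ k) * y (σ k) :=
          Finset.sum_le_sum_of_subset_of_nonneg (Finset.subset_univ _)
            fun i _ _ => mul_nonneg (hr _) (hy _)
      _ = ∑ k, r k * y k := Equiv.sum_comp σ (fun i => r i * y i)
  have hIic : ∀ f : Fin Z → ℝ, ∑ k ∈ Finset.Iic t, f k = f t + ∑ k ∈ Finset.Iio t, f k := by
    intro f
    rw [← Finset.Iio_insert, Finset.sum_insert (by simp)]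
  intro y0 y hy0' hy hfy
  rw [hstar, hy0]
  rcases le_or_gt c y0 with hcy | hcy
  · have h := key y0 y hy hfy (Finset.Iio t)
    rw [expand] at h
    have hAB : A ≤ B := hτle
    nlinarith [mul_nonneg (sub_nonneg.2 hcy) (sub_nonneg.2 hAB)]
  · have h := key y0 y hy hfy (Finset.Iic t)
    rw [expand, hIic (fun k => r (σ k) * K (σ k)), hIic (fun k => ρ (σ k) * r (σ k))] at h
    have hBA : B < ρ (σ t) * r (σ t) + A := by
      have := hτmax
      rwa [hIic (fun k => ρ (σ k) * r (σ k))] at this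
    rw [hKt] at h
    nlinarith [mul_nonneg (sub_nonneg.2 hcy.le) (sub_nonneg.2 hBA.le)]
end

section
/- For every feasible point y = (y_0, y_1, …, y_Z) of the dual linear program [LD], the dual objective is bounded below as follows: B y_0 + Σ_{k=1}^{Z} r_k y_k ≥ Σ_{k=1}^{τ} r_{σ(k)} K_{σ(k)} + K_{σ(τ+1)} · (B − Σ_{m=1}^{τ} ρ_{σ(m)} r_{σ(m)})/ρ_{σ(τ+1)}. -/
/-- For every feasible point y = (y_0, y_1, …, y_Z) of the dual linear
program [LD], the dual objective B y_0 + Σ_k r_k y_k is bounded below by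
Σ_{k=1}^{τ} r_{σ(k)} K_{σ(k)} + K_{σ(τ+1)} (B − Σ_{m=1}^{τ} ρ_{σ(m)} r_{σ(m)})/ρ_{σ(τ+1)}.
Indices are 0-based: the 1-based index k of the paper corresponds to the 0-based
index k-1; in particular σ(τ+1) of the paper is σ applied to the 0-based index τ. -/
theorem stmt_3 (Z : ℕ) (hZ : 1 ≤ Z) (ρ r K : Fin Z → ℝ) (B : ℝ)
    (hρ : ∀ k, 0 < ρ k) (hr : ∀ k, 0 ≤ r k) (hK : ∀ k, 0 ≤ K k)
    (hB : 0 ≤ B) (hfull : B < ∑ k, ρ k * r k)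
    (σ : Equiv.Perm (Fin Z))
    (hσ : ∀ k l : Fin Z, k ≤ l → K (σ l) / ρ (σ l) ≤ K (σ k) / ρ (σ k))
    (τ : ℕ) (hτ : τ < Z)
    (hτle : ∑ m ∈ Finset.Iio (⟨τ, hτ⟩ : Fin Z), ρ (σ m) * r (σ m) ≤ B)
    (hτmax : B < ∑ m ∈ Finset.Iic (⟨τ, hτ⟩ : Fin Z), ρ (σ m) * r (σ m))
    (y0 : ℝ) (y : Fin Z → ℝ)
    (hy0 : 0 ≤ y0) (hy : ∀ k, 0 ≤ y k) (hfeas : ∀ k, K k ≤ ρ k * y0 + y k) :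
    (∑ k ∈ Finset.Iio (⟨τ, hτ⟩ : Fin Z), r (σ k) * K (σ k)) +
      K (σ (⟨τ, hτ⟩ : Fin Z)) *
        ((B - ∑ m ∈ Finset.Iio (⟨τ, hτ⟩ : Fin Z), ρ (σ m) * r (σ m)) /
          ρ (σ (⟨τ, hτ⟩ : Fin Z))) ≤
      B * y0 + ∑ k, r k * y k := by
  classical
  set t : Fin Z := ⟨τ, hτ⟩ with ht
  set B' : ℝ := B - ∑ m ∈ Finset.Iio t, ρ (σ m) * r (σ m) with hB'
  have hB'0 : 0 ≤ B' := by simp [hB']; linarith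
  have hIic : ∑ m ∈ Finset.Iic t, ρ (σ m) * r (σ m)
      = (∑ m ∈ Finset.Iio t, ρ (σ m) * r (σ m)) + ρ (σ t) * r (σ t) := by
    rw [← Finset.Iio_insert, Finset.sum_insert (by simp)]
    ring
  have hB'lt : B' < ρ (σ t) * r (σ t) := by
    rw [hIic] at hτmax; simp [hB']; linarith
  -- rewrite the objective sum via σ
  have hsum : ∑ k, r k * y k = ∑ k, r (σ k) * y (σ k) :=
    (Equiv.sum_comp σ (fun k => r k * y k)).symm
  -- split the sum at t
  have hunion : Finset.Iio t ∪ Finset.Ici t = Finset.univ := by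
    ext x; simp [lt_or_ge x t]
  have hdisj : Disjoint (Finset.Iio t) (Finset.Ici t) := by
    simp [Finset.disjoint_left]
  have hsplit : ∑ k, r (σ k) * y (σ k)
      = (∑ k ∈ Finset.Iio t, r (σ k) * y (σ k)) + (r (σ t) * y (σ t)
        + ∑ k ∈ Finset.Ioi t, r (σ k) * y (σ k)) := by
    rw [← hunion, Finset.sum_union hdisj, ← Finset.Ioi_insert,
      Finset.sum_insert (by simp)]
  -- write B as sum of pieces
  have hBsplit : B = (∑ m ∈ Finset.Iio t, ρ (σ m) * r (σ m)) + B' := by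
    simp [hB']
  -- lower bound on the "head" part
  have hhead : ∑ k ∈ Finset.Iio t, r (σ k) * K (σ k)
      ≤ ∑ k ∈ Finset.Iio t, (ρ (σ k) * r (σ k) * y0 + r (σ k) * y (σ k)) := by
    apply Finset.sum_le_sum
    intro k _
    have := hfeas (σ k)
    nlinarith [hr (σ k)]
  -- lower bound on the "critical" part
  have hcrit : K (σ t) * (B' / ρ (σ t)) ≤ B' * y0 + r (σ t) * y (σ t) := by
    have hp : 0 < ρ (σ t) := hρ (σ t)
    have hf := hfeas (σ t)
    have hyt := hy (σ t)
    have h1 : K (σ t) * (B' / ρ (σ t))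
        ≤ (ρ (σ t) * y0 + y (σ t)) * (B' / ρ (σ t)) := by
      apply mul_le_mul_of_nonneg_right hf (div_nonneg hB'0 hp.le)
    have h2 : (ρ (σ t) * y0 + y (σ t)) * (B' / ρ (σ t))
        = B' * y0 + y (σ t) * (B' / ρ (σ t)) := by
      field_simp
    have h3 : y (σ t) * (B' / ρ (σ t)) ≤ y (σ t) * r (σ t) := by
      apply mul_le_mul_of_nonneg_left _ hyt
      rw [div_le_iff₀ hp]
      nlinarith
    linarith
  -- tail is nonnegative
  have htail : 0 ≤ ∑ k ∈ Finset.Ioi t, r (σ k) * y (σ k) :=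
    Finset.sum_nonneg fun k _ => mul_nonneg (hr _) (hy _)
  rw [hsum, hsplit]
  have hy0sum : B * y0 = (∑ m ∈ Finset.Iio t, ρ (σ m) * r (σ m)) * y0 + B' * y0 := by
    rw [hBsplit]; ring
  rw [hy0sum]
  have hIio : (∑ m ∈ Finset.Iio t, ρ (σ m) * r (σ m)) * y0
      + ∑ k ∈ Finset.Iio t, r (σ k) * y (σ k)
      = ∑ k ∈ Finset.Iio t, (ρ (σ k) * r (σ k) * y0 + r (σ k) * y (σ k)) := by
    rw [Finset.sum_add_distrib, Finset.sum_mul]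
  have : ∑ k ∈ Finset.Iio t, r (σ k) * K (σ k) + K (σ t) * (B' / ρ (σ t))
      ≤ (∑ k ∈ Finset.Iio t, (ρ (σ k) * r (σ k) * y0 + r (σ k) * y (σ k)))
        + (B' * y0 + r (σ t) * y (σ t)) := by
    linarith
  linarith [this, hIio]
end

section
/- The point y* ∈ ℝ^{Z+1} defined by y*_0 = K_{σ(τ+1)}/ρ_{σ(τ+1)}, y*_{σ(k)} = K_{σ(k)} − ρ_{σ(k)} K_{σ(τ+1)}/ρ_{σ(τ+1)} for 1 ≤ k ≤ τ, and y*_{σ(k)} = 0 for k ≥ τ+1, is feasible for [LD]: y*_0 ≥ 0, y*_k ≥ 0 for all k ∈ {1,…,Z}, and ρ_k y*_0 + y*_k ≥ K_k for all k ∈ {1,…,Z}. -/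
/-- The point y* (with y*_0 = K_{σ(τ+1)}/ρ_{σ(τ+1)}, sorted coordinates
K_{σ(k)} − ρ_{σ(k)} K_{σ(τ+1)}/ρ_{σ(τ+1)} for 1 ≤ k ≤ τ, and zero for k ≥ τ+1) is
feasible for the dual linear program [LD]: y*_0 ≥ 0, y*_k ≥ 0 for all k, and
ρ_k y*_0 + y*_k ≥ K_k for all k. Indices are 0-based: the 1-based index k of the
paper corresponds to the 0-based index k-1, so "1 ≤ k ≤ τ" becomes (k : ℕ) < τ and
"k ≥ τ+1" becomes τ ≤ (k : ℕ). -/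
theorem stmt_4 (Z : ℕ) (hZ : 1 ≤ Z) (ρ r K : Fin Z → ℝ) (B : ℝ)
    (hρ : ∀ k, 0 < ρ k) (hr : ∀ k, 0 ≤ r k) (hK : ∀ k, 0 ≤ K k)
    (hB : 0 ≤ B) (hfull : B < ∑ k, ρ k * r k)
    (σ : Equiv.Perm (Fin Z))
    (hσ : ∀ k l : Fin Z, k ≤ l → K (σ l) / ρ (σ l) ≤ K (σ k) / ρ (σ k))
    (τ : ℕ) (hτ : τ < Z)
    (hτle : ∑ m ∈ Finset.Iio (⟨τ, hτ⟩ : Fin Z), ρ (σ m) * r (σ m) ≤ B)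
    (hτmax : B < ∑ m ∈ Finset.Iic (⟨τ, hτ⟩ : Fin Z), ρ (σ m) * r (σ m))
    (ystar0 : ℝ) (ystar : Fin Z → ℝ)
    (hy0 : ystar0 = K (σ (⟨τ, hτ⟩ : Fin Z)) / ρ (σ (⟨τ, hτ⟩ : Fin Z)))
    (hylt : ∀ k : Fin Z, (k : ℕ) < τ → ystar (σ k) =
      K (σ k) - ρ (σ k) * (K (σ (⟨τ, hτ⟩ : Fin Z)) / ρ (σ (⟨τ, hτ⟩ : Fin Z))))
    (hyge : ∀ k : Fin Z, τ ≤ (k : ℕ) → ystar (σ k) = 0) :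
    0 ≤ ystar0 ∧ (∀ k, 0 ≤ ystar k) ∧ (∀ k, K k ≤ ρ k * ystar0 + ystar k) := by
  set t : Fin Z := ⟨τ, hτ⟩ with ht
  have hy0nn : 0 ≤ ystar0 := by
    rw [hy0]; exact div_nonneg (hK _) (le_of_lt (hρ _))
  refine ⟨hy0nn, ?_, ?_⟩
  · intro k
    obtain ⟨j, rfl⟩ : ∃ j, σ j = k := ⟨σ.symm k, σ.apply_symm_apply k⟩
    by_cases hj : (j : ℕ) < τ
    · rw [hylt j hj]
      have h1 : K (σ t) / ρ (σ t) ≤ K (σ j) / ρ (σ j) := hσ j t (le_of_lt hj)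
      have h2 := (div_le_div_iff₀ (hρ (σ t)) (hρ (σ j))).mp h1
      nlinarith [hρ (σ j), hρ (σ t), (div_nonneg (hK (σ t)) (hρ (σ t)).le),
        mul_le_mul_of_nonneg_left h1 (hρ (σ j)).le,
        mul_div_cancel₀ (K (σ t)) (hρ (σ t)).ne']
    · rw [hyge j (not_lt.mp hj)]
  · intro k
    obtain ⟨j, rfl⟩ : ∃ j, σ j = k := ⟨σ.symm k, σ.apply_symm_apply k⟩
    by_cases hj : (j : ℕ) < τ
    · rw [hylt j hj, hy0]; ring_nf; nlinarith []
    · rw [hyge j (not_lt.mp hj), hy0]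
      have h1 : K (σ j) / ρ (σ j) ≤ K (σ t) / ρ (σ t) := hσ t j (not_lt.mp hj)
      have := (div_le_div_iff₀ (hρ (σ j)) (hρ (σ t))).mp h1
      have h2 : K (σ j) ≤ ρ (σ j) * (K (σ t) / ρ (σ t)) := by
        rw [mul_div_assoc'] ; rw [le_div_iff₀ (hρ (σ t))]; linarith [this]
      linarith
end

section
/- The Frank-Wolfe iterates with step size γ_t = 2/(t+2) satisfy the primal convergence bound U(a*) − U(a^{(t)}) ≤ 2C/(t+2) for all t ≥ 1, where a* is any maximizer of U over M. -/
open scoped RealInnerProductSpace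
open Filter Topology

lemma grad_first_order {d : ℕ} {M : Set (EuclideanSpace ℝ (Fin d))}
    {U : EuclideanSpace ℝ (Fin d) → ℝ} (hU : ContDiff ℝ 1 U)
    (hconc : ConcaveOn ℝ M U) {x y : EuclideanSpace ℝ (Fin d)}
    (hx : x ∈ M) (hy : y ∈ M) :
    U y - U x ≤ ⟪gradient U x, y - x⟫ := by
  have hdiff : HasFDerivAt U (fderiv ℝ U x) x :=
    ((hU.differentiable one_ne_zero) x).hasFDerivAt
  have hgrad : ⟪gradient U x, y - x⟫ = fderiv ℝ U x (y - x) := by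
    simp [gradient, InnerProductSpace.toDual_symm_apply]
  have hline : HasDerivAt (fun γ : ℝ => x + γ • (y - x)) (y - x) 0 := by
    simpa using ((hasDerivAt_id (0:ℝ)).smul_const (y - x)).const_add x
  have hg : HasDerivAt (fun γ : ℝ => U (x + γ • (y - x))) (fderiv ℝ U x (y - x)) 0 := by
    have h0 : x + (0:ℝ) • (y - x) = x := by simp
    have hdiff' : HasFDerivAt U (fderiv ℝ U x) (((fun γ : ℝ => x + γ • (y - x))) 0) := by
      simpa [h0] using hdiff
    exact hdiff'.comp_hasDerivAt 0 hline
  have htend : Tendsto (slope (fun γ : ℝ => U (x + γ • (y - x))) 0) (𝓝[>] 0)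
      (𝓝 (fderiv ℝ U x (y - x))) :=
    (hasDerivAt_iff_tendsto_slope.1 hg).mono_left
      (nhdsWithin_mono _ (by intro z hz; exact ne_of_gt hz))
  rw [hgrad]
  refine ge_of_tendsto htend ?_
  filter_upwards [Ioo_mem_nhdsGT_of_mem (Set.left_mem_Ico.2 one_pos)] with γ hγ
  obtain ⟨hγ0, hγ1⟩ := hγ
  have hcomb : x + γ • (y - x) = (1 - γ) • x + γ • y := by
    simp [smul_sub, sub_smul]; abel
  have := hconc.2 hx hy (by linarith : (0:ℝ) ≤ 1 - γ) hγ0.le (by ring)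
  rw [← hcomb] at this
  have hslope : slope (fun γ : ℝ => U (x + γ • (y - x))) 0 γ
      = (U (x + γ • (y - x)) - U x) / γ := by
    simp [slope_def_field]
  rw [hslope, le_div_iff₀ hγ0]
  simp only [smul_eq_mul] at this
  nlinarith

/-- Frank-Wolfe with step size γ_t = 2/(t+2) on a nonempty convex compact
set M, for a continuously differentiable function U concave on M with curvature
constant C ≥ 0, satisfies the primal bound U(a*) − U(a^{(t)}) ≤ 2C/(t+2) for all
t ≥ 1, where a* is any maximizer of U over M. -/
theorem stmt_9 (d : ℕ) (M : Set (EuclideanSpace ℝ (Fin d)))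
    (hMne : M.Nonempty) (hMconv : Convex ℝ M) (hMcomp : IsCompact M)
    (U : EuclideanSpace ℝ (Fin d) → ℝ) (hU : ContDiff ℝ 1 U)
    (hconc : ConcaveOn ℝ M U) (C : ℝ) (hC : 0 ≤ C)
    (hcurv : ∀ x ∈ M, ∀ s ∈ M, ∀ γ ∈ Set.Icc (0 : ℝ) 1,
      U x + γ * ⟪gradient U x, s - x⟫ - γ ^ 2 / 2 * C ≤ U (x + γ • (s - x)))
    (a s : ℕ → EuclideanSpace ℝ (Fin d)) (ha0 : a 0 ∈ M)
    (hsM : ∀ t, s t ∈ M)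
    (hsmax : ∀ t, ∀ x ∈ M, ⟪gradient U (a t), x⟫ ≤ ⟪gradient U (a t), s t⟫)
    (hupd : ∀ t : ℕ, a (t + 1) = a t + (2 / ((t : ℝ) + 2)) • (s t - a t))
    (astar : EuclideanSpace ℝ (Fin d)) (hastar : astar ∈ M)
    (hmax : ∀ x ∈ M, U x ≤ U astar) :
    ∀ t : ℕ, 1 ≤ t → U astar - U (a t) ≤ 2 * C / ((t : ℝ) + 2) := by
  have hγmem : ∀ t : ℕ, (2 / ((t : ℝ) + 2)) ∈ Set.Icc (0:ℝ) 1 := by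
    intro t
    have ht2 : (0:ℝ) < (t:ℝ) + 2 := by positivity
    constructor
    · positivity
    · rw [div_le_one ht2]; have : (0:ℝ) ≤ (t:ℝ) := Nat.cast_nonneg t; linarith
  have haM : ∀ t, a t ∈ M := by
    intro t
    induction t with
    | zero => exact ha0
    | succ n ih =>
      rw [hupd n]
      have hγ := hγmem n
      have hcomb : a n + (2 / ((n : ℝ) + 2)) • (s n - a n)
          = (1 - 2 / ((n : ℝ) + 2)) • a n + (2 / ((n : ℝ) + 2)) • s n := by
        simp [smul_sub, sub_smul]; abel
      rw [hcomb]
      exact hMconv ih (hsM n) (by linarith [hγ.2]) hγ.1 (by ring)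
  have key : ∀ t : ℕ, U astar - U (a (t+1)) ≤
      (1 - 2 / ((t : ℝ) + 2)) * (U astar - U (a t)) + (2 / ((t : ℝ) + 2))^2 / 2 * C := by
    intro t
    set γ := 2 / ((t : ℝ) + 2) with hγdef
    have hγ := hγmem t
    have h1 := hcurv (a t) (haM t) (s t) (hsM t) γ hγ
    rw [← hupd t] at h1
    have h2 : ⟪gradient U (a t), astar - a t⟫ ≤ ⟪gradient U (a t), s t - a t⟫ := by
      rw [inner_sub_right, inner_sub_right]
      have := hsmax t astar hastar
      linarith
    have h3 : U astar - U (a t) ≤ ⟪gradient U (a t), astar - a t⟫ :=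
      grad_first_order hU hconc (haM t) hastar
    have h4 : γ * (U astar - U (a t)) ≤ γ * ⟪gradient U (a t), s t - a t⟫ :=
      mul_le_mul_of_nonneg_left (le_trans h3 h2) hγ.1
    nlinarith
  intro t ht
  induction t, ht using Nat.le_induction with
  | base =>
    have h := key 0
    norm_num at h ⊢
    linarith
  | succ n hn ih =>
    have h := key n
    have hT : (0:ℝ) ≤ (n:ℝ) := Nat.cast_nonneg n
    have h2 : (0:ℝ) < (n:ℝ) + 2 := by linarith
    have h3 : (0:ℝ) < (n:ℝ) + 3 := by linarith
    have hγ := hγmem n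
    have hmono : (1 - 2 / ((n : ℝ) + 2)) * (U astar - U (a n))
        ≤ (1 - 2 / ((n : ℝ) + 2)) * (2 * C / ((n : ℝ) + 2)) :=
      mul_le_mul_of_nonneg_left ih (by linarith [hγ.2])
    have halg : (1 - 2 / ((n : ℝ) + 2)) * (2 * C / ((n : ℝ) + 2))
        + (2 / ((n : ℝ) + 2))^2 / 2 * C ≤ 2 * C / ((n : ℝ) + 3) := by
      have hL : (1 - 2 / ((n : ℝ) + 2)) * (2 * C / ((n : ℝ) + 2))
          + (2 / ((n : ℝ) + 2))^2 / 2 * C = 2 * C * ((n:ℝ)+1) / ((n:ℝ)+2)^2 := by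
        field_simp
        ring
      rw [hL, div_le_div_iff₀ (by positivity) h3]
      nlinarith
    push_cast
    calc U astar - U (a (n+1)) ≤ _ := h
      _ ≤ (1 - 2 / ((n : ℝ) + 2)) * (2 * C / ((n : ℝ) + 2)) + (2 / ((n : ℝ) + 2))^2 / 2 * C := by linarith
      _ ≤ 2 * C / ((n : ℝ) + 3) := halg
      _ = 2 * C / ((n : ℝ) + 1 + 2) := by ring_nf
end
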